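/- Let S be a reduced atomic monoid. For every atom u of S, the tame degree satisfies t(S,u) ≤ sup{ max(|x|,|y|) : (x,y) ∈ 𝒜(∼_S), x ∈ uZ(S) }. Consequently t(S) ≤ a(S) := sup{ |x| : (x,y) ∈ 𝒜(∼_S) for some y ∈ Z(S) }. -/

import Mathlib

variable {S : Type*} [CancelCommMonoid S] [DecidableEq S]

/-- `z` is a factorization of `a`: a multiset of atoms with product `a`. -/
def IsFactorization (a : S) (z : Multiset S) : Prop :=
  (∀ x ∈ z, Irreducible x) ∧ z.prod = a

/-- The distance between two factorizations. -/
def fdist (z z' : Multiset S) : ℕ :=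
  max (Multiset.card (z - z')) (Multiset.card (z' - z))

/-- Membership in the monoid of relations `∼_S`. -/
def InRel (p : Multiset S × Multiset S) : Prop :=
  (∀ x ∈ p.1, Irreducible x) ∧ (∀ x ∈ p.2, Irreducible x) ∧ p.1.prod = p.2.prod

/-- Atoms of the monoid of relations `∼_S`. -/
def IsRelAtom (p : Multiset S × Multiset S) : Prop :=
  InRel p ∧ p ≠ (0, 0) ∧
    ∀ q r : Multiset S × Multiset S, InRel q → InRel r →
      p = (q.1 + r.1, q.2 + r.2) → q = (0, 0) ∨ r = (0, 0)

/-- The tame degree `t(a,u)`. -/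
noncomputable def tameDeg (a : S) (u : S) : ℕ∞ :=
  sInf {N : ℕ∞ | ∀ z : Multiset S, IsFactorization a z →
    (∃ z₀ : Multiset S, IsFactorization a z₀ ∧ u ∈ z₀) →
    ∃ z' : Multiset S, IsFactorization a z' ∧ u ∈ z' ∧ (fdist z z' : ℕ∞) ≤ N}

/-- If one side of a relation is empty, so is the other. -/
lemma InRel.snd_eq_zero {p : Multiset S × Multiset S} (hp : InRel p) (h1 : p.1 = 0) :
    p.2 = 0 := by
  by_contra h2
  obtain ⟨x, hx⟩ := Multiset.exists_mem_of_ne_zero h2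
  have hprod : p.2.prod = 1 := by
    rw [← hp.2.2, h1, Multiset.prod_zero]
  have : IsUnit x := isUnit_of_dvd_one (hprod ▸ Multiset.dvd_prod hx)
  exact (hp.2.1 x hx).not_isUnit this

lemma InRel.ne_zero {p : Multiset S × Multiset S} (hp : InRel p) (h : p ≠ (0, 0)) :
    p.1 ≠ 0 ∧ p.2 ≠ 0 := by
  constructor
  · intro h1
    exact h (Prod.ext h1 (hp.snd_eq_zero h1))
  · intro h2
    have hp' : InRel (p.2, p.1) := ⟨hp.2.1, hp.1, hp.2.2.symm⟩
    have h1 := hp'.snd_eq_zero h2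
    exact h (Prod.ext h1 h2)

lemma IsRelAtom.swap {p : Multiset S × Multiset S} (hp : IsRelAtom p) :
    IsRelAtom (p.2, p.1) := by
  obtain ⟨hrel, hne, hatom⟩ := hp
  refine ⟨⟨hrel.2.1, hrel.1, hrel.2.2.symm⟩, ?_, ?_⟩
  · intro h
    exact hne (Prod.ext (congrArg Prod.snd h) (congrArg Prod.fst h))
  · intro q r hq hr heq
    have hq' : InRel (q.2, q.1) := ⟨hq.2.1, hq.1, hq.2.2.symm⟩
    have hr' : InRel (r.2, r.1) := ⟨hr.2.1, hr.1, hr.2.2.symm⟩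
    have := hatom (q.2, q.1) (r.2, r.1) hq' hr'
      (Prod.ext (congrArg Prod.snd heq) (congrArg Prod.fst heq))
    rcases this with h | h
    · exact Or.inl (Prod.ext (congrArg Prod.snd h) (congrArg Prod.fst h))
    · exact Or.inr (Prod.ext (congrArg Prod.snd h) (congrArg Prod.fst h))

lemma mem_list_sum_map {α : Type*} (f : α → Multiset S) (u : S) :
    ∀ L : List α, u ∈ (L.map f).sum → ∃ q ∈ L, u ∈ f q := by
  intro L
  induction L with
  | nil => simp
  | cons a L ih =>
    intro h
    simp only [List.map_cons, List.sum_cons, Multiset.mem_add] at h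
    rcases h with h | h
    · exact ⟨a, List.mem_cons_self, h⟩
    · obtain ⟨q, hqL, hq⟩ := ih h
      exact ⟨q, List.mem_cons_of_mem a hqL, hq⟩

/-- Every relation decomposes into relation atoms. -/
lemma rel_decomp (p : Multiset S × Multiset S) (hp : InRel p) :
    ∃ L : List (Multiset S × Multiset S), (∀ q ∈ L, IsRelAtom q) ∧
      p.1 = (L.map Prod.fst).sum ∧ p.2 = (L.map Prod.snd).sum := by
  generalize hn : Multiset.card p.1 + Multiset.card p.2 = n
  induction n using Nat.strong_induction_on generalizing p with
  | _ n ih =>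
    by_cases hp0 : p = (0, 0)
    · exact ⟨[], by simp, by simp [hp0], by simp [hp0]⟩
    by_cases hpa : IsRelAtom p
    · exact ⟨[p], by simp [hpa], by simp, by simp⟩
    have : ∃ q r : Multiset S × Multiset S, InRel q ∧ InRel r ∧
        p = (q.1 + r.1, q.2 + r.2) ∧ q ≠ (0, 0) ∧ r ≠ (0, 0) := by
      unfold IsRelAtom at hpa
      push_neg at hpa
      obtain ⟨q, r, hq, hr, heq, hq0, hr0⟩ := hpa hp hp0
      exact ⟨q, r, hq, hr, heq, hq0, hr0⟩
    obtain ⟨q, r, hq, hr, heq, hq0, hr0⟩ := this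
    have hq1 : q.1 ≠ 0 := (hq.ne_zero hq0).1
    have hq2 : q.2 ≠ 0 := (hq.ne_zero hq0).2
    have hr1 : r.1 ≠ 0 := (hr.ne_zero hr0).1
    have hr2 : r.2 ≠ 0 := (hr.ne_zero hr0).2
    have hcard : Multiset.card q.1 + Multiset.card q.2
        + (Multiset.card r.1 + Multiset.card r.2) = n := by
      rw [← hn, heq]
      simp [Multiset.card_add]
      ring
    have hqpos : 0 < Multiset.card q.1 + Multiset.card q.2 :=
      Nat.lt_of_lt_of_le (Multiset.card_pos.mpr hq1) (Nat.le_add_right _ _)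
    have hrpos : 0 < Multiset.card r.1 + Multiset.card r.2 :=
      Nat.lt_of_lt_of_le (Multiset.card_pos.mpr hr1) (Nat.le_add_right _ _)
    obtain ⟨Lq, hLq, hLq1, hLq2⟩ := ih (Multiset.card q.1 + Multiset.card q.2)
      (by omega) q hq rfl
    obtain ⟨Lr, hLr, hLr1, hLr2⟩ := ih (Multiset.card r.1 + Multiset.card r.2)
      (by omega) r hr rfl
    refine ⟨Lq ++ Lr, ?_, ?_, ?_⟩
    · intro x hx
      rcases List.mem_append.mp hx with h | h
      · exact hLq x h
      · exact hLr x h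
    · rw [heq]; simp [hLq1, hLr1]
    · rw [heq]; simp [hLq2, hLr2]

/-- for every atom `u`,
`t(S,u) ≤ sup{ max(|x|,|y|) : (x,y) ∈ 𝒜(∼_S), x ∈ uZ(S) }`, and consequently
`t(S) ≤ a(S) = sup{ |x| : (x,y) ∈ 𝒜(∼_S) }`. -/
theorem tame_le_sup_relation_atoms
    (hatomic : ∀ a : S, ¬IsUnit a →
      ∃ m : Multiset S, (∀ x ∈ m, Irreducible x) ∧ m.prod = a)
    (hred : ∀ u : S, IsUnit u → u = 1) :
    (∀ u : S, Irreducible u →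
      (⨆ a : S, tameDeg a u) ≤
        sSup {n : ℕ∞ | ∃ p : Multiset S × Multiset S, IsRelAtom p ∧ u ∈ p.1 ∧
          n = (max (Multiset.card p.1) (Multiset.card p.2) : ℕ∞)}) ∧
    (⨆ u ∈ {u : S | Irreducible u}, ⨆ a : S, tameDeg a u) ≤
      sSup {n : ℕ∞ | ∃ p : Multiset S × Multiset S, IsRelAtom p ∧
        n = (Multiset.card p.1 : ℕ∞)} := by
  have key : ∀ u : S, Irreducible u →
      (⨆ a : S, tameDeg a u) ≤
        sSup {n : ℕ∞ | ∃ p : Multiset S × Multiset S, IsRelAtom p ∧ u ∈ p.1 ∧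
          n = (max (Multiset.card p.1) (Multiset.card p.2) : ℕ∞)} := by
    intro u hu
    set B := sSup {n : ℕ∞ | ∃ p : Multiset S × Multiset S, IsRelAtom p ∧ u ∈ p.1 ∧
        n = (max (Multiset.card p.1) (Multiset.card p.2) : ℕ∞)} with hB
    refine iSup_le fun a => sInf_le ?_
    intro z hz ⟨z₀, hz₀, hu0⟩
    have hrel : InRel (z, z₀) := ⟨hz.1, hz₀.1, by rw [hz.2, hz₀.2]⟩
    obtain ⟨L, hL, hL1, hL2⟩ := rel_decomp (z, z₀) hrel
    simp only at hL1 hL2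
    have hu0' : u ∈ (L.map Prod.snd).sum := hL2 ▸ hu0
    obtain ⟨q, hqL, huq⟩ := mem_list_sum_map Prod.snd u L hu0'
    have hqa : IsRelAtom q := hL q hqL
    have hq1z : q.1 ≤ z := by
      rw [hL1]
      exact List.single_le_sum (fun x _ => Multiset.zero_le x) _
        (List.mem_map_of_mem (f := Prod.fst) hqL)
    set z' : Multiset S := (z - q.1) + q.2 with hz'
    have hzeq : (z - q.1) + q.1 = z := tsub_add_cancel_of_le hq1z
    refine ⟨z', ⟨?_, ?_⟩, ?_, ?_⟩
    · intro x hx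
      rcases Multiset.mem_add.mp hx with h | h
      · exact hz.1 x (Multiset.mem_of_le (Multiset.sub_le_self _ _) h)
      · exact hqa.1.2.1 x h
    · rw [hz', Multiset.prod_add, ← hqa.1.2.2, ← Multiset.prod_add, hzeq, hz.2]
    · exact Multiset.mem_add.mpr (Or.inr huq)
    · have h1 : z - z' ≤ q.1 := by
        rw [hz', tsub_add_eq_tsub_tsub]
        exact le_trans (Multiset.sub_le_self _ _)
          (le_of_eq (tsub_tsub_cancel_of_le hq1z))
      have h2 : z' - z ≤ q.2 := by
        rw [hz']
        calc (z - q.1) + q.2 - z = (z - q.1) + q.2 - ((z - q.1) + q.1) := by rw [hzeq]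
          _ = q.2 - q.1 := add_tsub_add_eq_tsub_left _ _ _
          _ ≤ q.2 := Multiset.sub_le_self _ _
      have hfd : fdist z z' ≤ max (Multiset.card q.2) (Multiset.card q.1) := by
        unfold fdist
        exact max_le (le_max_of_le_right (Multiset.card_le_card h1))
          (le_max_of_le_left (Multiset.card_le_card h2))
      have hmem : ((max (Multiset.card q.2) (Multiset.card q.1) : ℕ) : ℕ∞) ∈
          {n : ℕ∞ | ∃ p : Multiset S × Multiset S, IsRelAtom p ∧ u ∈ p.1 ∧
            n = (max (Multiset.card p.1) (Multiset.card p.2) : ℕ∞)} :=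
        ⟨(q.2, q.1), hqa.swap, huq, rfl⟩
      calc (fdist z z' : ℕ∞) ≤ ((max (Multiset.card q.2) (Multiset.card q.1) : ℕ) : ℕ∞) :=
            Nat.cast_le.mpr hfd
        _ ≤ B := le_sSup hmem
  refine ⟨key, ?_⟩
  refine iSup₂_le fun u hu => le_trans (key u hu) (sSup_le ?_)
  rintro n ⟨p, hp, hup, rfl⟩
  exact max_le (le_sSup ⟨p, hp, rfl⟩) (le_sSup ⟨(p.2, p.1), hp.swap, rfl⟩)
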